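/- Let s : ℝ × ℝ → ℝ be a strictly 𝓕₀-consistent scoring function for the mode, and let a < b be real numbers. Then s(a, y) = s(b, y) for Lebesgue almost all y ∈ (a, b). -/

import Mathlib

open MeasureTheory Set Filter

/-- `f` belongs to `𝓕₀` with mode `x₀`: continuous, nonnegative, integrates to 1,
nondecreasing on `(-∞, x₀]`, nonincreasing on `[x₀, ∞)`, and `x₀` is the unique
local (hence global) maximum. -/
def IsUnimodalDensity (f : ℝ → ℝ) (x₀ : ℝ) : Prop :=
  Continuous f ∧ (∀ y, 0 ≤ f y) ∧ (∫ y : ℝ, f y) = 1 ∧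
    MonotoneOn f (Set.Iic x₀) ∧ AntitoneOn f (Set.Ici x₀) ∧
    ∀ x, x ≠ x₀ → f x < f x₀

/-- `f` belongs to the class `𝓕₀` of strictly unimodal distributions with
continuous Lebesgue density. -/
def MemF0 (f : ℝ → ℝ) : Prop := ∃ x₀, IsUnimodalDensity f x₀

/-- `s` is a strictly `𝓕₀`-consistent scoring function for the mode. -/
def StrictlyF0Consistent (s : ℝ × ℝ → ℝ) : Prop :=
  Measurable s ∧
  (∀ x : ℝ, ∀ f : ℝ → ℝ, MemF0 f → Integrable (fun y => |s (x, y)| * f y)) ∧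
  (∀ f : ℝ → ℝ, ∀ t : ℝ, IsUnimodalDensity f t → ∀ x : ℝ,
    (∫ y : ℝ, s (t, y) * f y) ≤ (∫ y : ℝ, s (x, y) * f y) ∧
    ((∫ y : ℝ, s (t, y) * f y) = (∫ y : ℝ, s (x, y) * f y) → x = t))

/-- `v` is a strict `𝓕₀`-identification function for the mode. -/
def StrictF0Identification (v : ℝ × ℝ → ℝ) : Prop :=
  Measurable v ∧
  (∀ x : ℝ, ∀ f : ℝ → ℝ, MemF0 f → Integrable (fun y => |v (x, y)| * f y)) ∧
  (∀ f : ℝ → ℝ, ∀ t : ℝ, IsUnimodalDensity f t → ∀ x : ℝ,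
    (∫ y : ℝ, v (x, y) * f y) = 0 ↔ x = t)
/-! ### Gaussian densities -/

noncomputable def gsd (m y : ℝ) : ℝ := Real.exp (-(y - m) ^ 2) / Real.sqrt Real.pi

lemma gsd_pos (m y : ℝ) : 0 < gsd m y :=
  div_pos (Real.exp_pos _) (Real.sqrt_pos.mpr Real.pi_pos)

lemma gsd_nonneg (m y : ℝ) : 0 ≤ gsd m y := (gsd_pos m y).le

lemma gsd_continuous (m : ℝ) : Continuous (gsd m) := by
  unfold gsd
  fun_prop

lemma gsd_integrable (m : ℝ) : Integrable (gsd m) := by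
  have h : Integrable (fun y : ℝ => Real.exp (-1 * y ^ 2)) := integrable_exp_neg_mul_sq one_pos
  have h2 : Integrable (fun y : ℝ => Real.exp (-1 * (y - m) ^ 2)) := h.comp_sub_right m
  have h3 : Integrable (fun y : ℝ => Real.exp (-(y - m) ^ 2)) := by
    simpa using h2
  convert h3.mul_const (Real.sqrt Real.pi)⁻¹ using 1
  funext y
  simp [gsd, div_eq_mul_inv]

lemma gsd_integral (m : ℝ) : (∫ y : ℝ, gsd m y) = 1 := by
  have h1 : (∫ y : ℝ, Real.exp (-1 * y ^ 2)) = Real.sqrt (Real.pi / 1) := integral_gaussian 1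
  have h2 : (∫ y : ℝ, Real.exp (-(y - m) ^ 2)) = Real.sqrt Real.pi := by
    have := integral_sub_right_eq_self (μ := volume) (fun y : ℝ => Real.exp (-y ^ 2)) m
    rw [this]
    simpa using h1
  have hπ : Real.sqrt Real.pi ≠ 0 := ne_of_gt (Real.sqrt_pos.mpr Real.pi_pos)
  rw [show (fun y : ℝ => gsd m y) = fun y : ℝ => Real.exp (-(y - m) ^ 2) / Real.sqrt Real.pi
    from rfl]
  rw [integral_div, h2, div_self hπ]

lemma gsd_mono (m : ℝ) : MonotoneOn (gsd m) (Set.Iic m) := by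
  intro x hx y hy hxy
  simp only [Set.mem_Iic] at hx hy
  unfold gsd
  exact (div_le_div_iff_of_pos_right (Real.sqrt_pos.mpr Real.pi_pos)).mpr
    (Real.exp_le_exp.mpr (by nlinarith))

lemma gsd_anti (m : ℝ) : AntitoneOn (gsd m) (Set.Ici m) := by
  intro x hx y hy hxy
  simp only [Set.mem_Ici] at hx hy
  unfold gsd
  exact (div_le_div_iff_of_pos_right (Real.sqrt_pos.mpr Real.pi_pos)).mpr
    (Real.exp_le_exp.mpr (by nlinarith))

lemma gsd_strict (m x : ℝ) (hx : x ≠ m) : gsd m x < gsd m m := by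
  unfold gsd
  apply (div_lt_div_iff_of_pos_right (Real.sqrt_pos.mpr Real.pi_pos)).mpr
  apply Real.exp_lt_exp.mpr
  have hne : x - m ≠ 0 := sub_ne_zero.mpr hx
  have : (x - m) ^ 2 > 0 := by positivity
  nlinarith [sq_nonneg (m - m)]

lemma gsd_unimodal (m : ℝ) : IsUnimodalDensity (gsd m) m :=
  ⟨gsd_continuous m, gsd_nonneg m, gsd_integral m, gsd_mono m, gsd_anti m, gsd_strict m⟩

lemma gsd_memF0 (m : ℝ) : MemF0 (gsd m) := ⟨m, gsd_unimodal m⟩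
/-! ### Mixtures and the basic score identity -/

section Core

variable {s : ℝ × ℝ → ℝ}

lemma s_meas (hs : StrictlyF0Consistent s) (x : ℝ) : Measurable fun y => s (x, y) :=
  hs.1.comp measurable_prodMk_left

lemma mix_unimodal (f : ℝ → ℝ) (m δ : ℝ) (hc : Continuous f) (h0 : ∀ y, 0 ≤ f y)
    (hi : Integrable f) (h1 : (∫ y : ℝ, f y) = 1) (hm : MonotoneOn f (Set.Iic m))
    (ha : AntitoneOn f (Set.Ici m)) (hδ0 : 0 < δ) (hδ1 : δ < 1) :
    IsUnimodalDensity (fun y => (1 - δ) * f y + δ * gsd m y) m := by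
  refine ⟨(continuous_const.mul hc).add (continuous_const.mul (gsd_continuous m)),
    fun y => add_nonneg (mul_nonneg (by linarith) (h0 y))
      (mul_nonneg hδ0.le (gsd_nonneg m y)), ?_, ?_, ?_, ?_⟩
  · rw [integral_add (hi.const_mul _) ((gsd_integrable m).const_mul _),
      integral_const_mul, integral_const_mul, h1, gsd_integral]
    ring
  · intro x hx y hy hxy
    exact add_le_add (mul_le_mul_of_nonneg_left (hm hx hy hxy) (by linarith))
      (mul_le_mul_of_nonneg_left (gsd_mono m hx hy hxy) hδ0.le)
  · intro x hx y hy hxy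
    exact add_le_add (mul_le_mul_of_nonneg_left (ha hx hy hxy) (by linarith))
      (mul_le_mul_of_nonneg_left (gsd_anti m hx hy hxy) hδ0.le)
  · intro x hxm
    show (1 - δ) * f x + δ * gsd m x < (1 - δ) * f m + δ * gsd m m
    have hfx : f x ≤ f m := by
      rcases le_total x m with h | h
      · exact hm (Set.mem_Iic.mpr h) (Set.mem_Iic.mpr le_rfl) h
      · exact ha (Set.mem_Ici.mpr le_rfl) (Set.mem_Ici.mpr h) h
    have hg : gsd m x < gsd m m := gsd_strict m x hxm
    have hh1 : (1 - δ) * f x ≤ (1 - δ) * f m := mul_le_mul_of_nonneg_left hfx (by linarith)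
    have hh2 : δ * gsd m x < δ * gsd m m := (mul_lt_mul_iff_right₀ hδ0).mpr hg
    linarith

lemma int_abs_prod (hs : StrictlyF0Consistent s) (x m : ℝ) (f : ℝ → ℝ) (hc : Continuous f)
    (h0 : ∀ y, 0 ≤ f y) (hi : Integrable f) (h1 : (∫ y : ℝ, f y) = 1)
    (hm : MonotoneOn f (Set.Iic m)) (ha : AntitoneOn f (Set.Ici m)) :
    Integrable (fun y => |s (x, y)| * f y) := by
  have hmix : IsUnimodalDensity (fun y => (1 - (1:ℝ)/2) * f y + (1/2) * gsd m y) m :=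
    mix_unimodal f m (1/2) hc h0 hi h1 hm ha (by norm_num) (by norm_num)
  have hI : Integrable (fun y => |s (x, y)| * ((1 - (1:ℝ)/2) * f y + (1/2) * gsd m y)) :=
    hs.2.1 x _ ⟨m, hmix⟩
  refine (hI.const_mul 2).mono' ?_ ?_
  · exact (((s_meas hs x).abs).mul hc.measurable).aestronglyMeasurable
  · refine Filter.Eventually.of_forall fun y => ?_
    have hb : |s (x, y)| * f y ≤ 2 * (|s (x, y)| * ((1 - (1:ℝ)/2) * f y + (1/2) * gsd m y)) := by
      have := abs_nonneg (s (x, y))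
      have := h0 y
      have := gsd_nonneg m y
      nlinarith
    have hn : 0 ≤ |s (x, y)| * f y := mul_nonneg (abs_nonneg _) (h0 y)
    rw [Real.norm_eq_abs, abs_of_nonneg hn]
    exact hb

lemma int_prod (hs : StrictlyF0Consistent s) (x m : ℝ) (f : ℝ → ℝ) (hc : Continuous f)
    (h0 : ∀ y, 0 ≤ f y) (hi : Integrable f) (h1 : (∫ y : ℝ, f y) = 1)
    (hm : MonotoneOn f (Set.Iic m)) (ha : AntitoneOn f (Set.Ici m)) :
    Integrable (fun y => s (x, y) * f y) := by
  refine (int_abs_prod hs x m f hc h0 hi h1 hm ha).mono'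
    (((s_meas hs x).mul hc.measurable).aestronglyMeasurable)
    (Filter.Eventually.of_forall fun y => ?_)
  rw [Real.norm_eq_abs, abs_mul, abs_of_nonneg (h0 y)]

lemma score_le (hs : StrictlyF0Consistent s) (u x : ℝ) (f : ℝ → ℝ) (hc : Continuous f)
    (h0 : ∀ y, 0 ≤ f y) (hi : Integrable f) (h1 : (∫ y : ℝ, f y) = 1)
    (hm : MonotoneOn f (Set.Iic u)) (ha : AntitoneOn f (Set.Ici u)) :
    (∫ y : ℝ, s (u, y) * f y) ≤ ∫ y : ℝ, s (x, y) * f y := by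
  set A : ℝ → ℝ := fun t => ∫ y : ℝ, s (t, y) * f y with hA
  set B : ℝ → ℝ := fun t => ∫ y : ℝ, s (t, y) * gsd u y with hB
  have hgsd := gsd_unimodal u
  have expand : ∀ (t : ℝ) (δ : ℝ),
      (∫ y : ℝ, s (t, y) * ((1 - δ) * f y + δ * gsd u y)) = (1 - δ) * A t + δ * B t := by
    intro t δ
    have e1 : Integrable fun y => (1 - δ) * (s (t, y) * f y) :=
      (int_prod hs t u f hc h0 hi h1 hm ha).const_mul _
    have e2 : Integrable fun y => δ * (s (t, y) * gsd u y) :=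
      (int_prod hs t u (gsd u) (gsd_continuous u) (gsd_nonneg u) (gsd_integrable u)
        (gsd_integral u) (gsd_mono u) (gsd_anti u)).const_mul _
    calc (∫ y : ℝ, s (t, y) * ((1 - δ) * f y + δ * gsd u y))
        = ∫ y : ℝ, ((1 - δ) * (s (t, y) * f y) + δ * (s (t, y) * gsd u y)) := by
          congr 1; funext y; ring
      _ = (1 - δ) * A t + δ * B t := by
          rw [integral_add e1 e2, integral_const_mul, integral_const_mul]
  have key : ∀ n : ℕ, (1 - 1/((n:ℝ)+2)) * A u + (1/((n:ℝ)+2)) * B u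
      ≤ (1 - 1/((n:ℝ)+2)) * A x + (1/((n:ℝ)+2)) * B x := by
    intro n
    have hδ0 : (0:ℝ) < 1/((n:ℝ)+2) := by positivity
    have hδ1 : (1:ℝ)/((n:ℝ)+2) < 1 := by
      rw [div_lt_one (by positivity)]
      have : (0:ℝ) ≤ (n:ℝ) := Nat.cast_nonneg n
      linarith
    have hmix := mix_unimodal f u (1/((n:ℝ)+2)) hc h0 hi h1 hm ha hδ0 hδ1
    have := (hs.2.2 _ u hmix x).1
    rwa [expand u _, expand x _] at this
  have hδlim : Filter.Tendsto (fun n : ℕ => 1/((n:ℝ)+2)) Filter.atTop (nhds 0) := by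
    have h2 : Filter.Tendsto (fun n : ℕ => ((n:ℝ)+2)) Filter.atTop Filter.atTop :=
      Filter.tendsto_atTop_add_const_right _ 2 tendsto_natCast_atTop_atTop
    simpa [one_div, Pi.inv_def] using h2.inv_tendsto_atTop
  have hL : Filter.Tendsto (fun n : ℕ => (1 - 1/((n:ℝ)+2)) * A u + (1/((n:ℝ)+2)) * B u)
      Filter.atTop (nhds (A u)) := by
    have := (((tendsto_const_nhds (x := (1:ℝ))).sub hδlim).mul
      (tendsto_const_nhds (x := A u))).add (hδlim.mul (tendsto_const_nhds (x := B u)))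
    simpa using this
  have hR : Filter.Tendsto (fun n : ℕ => (1 - 1/((n:ℝ)+2)) * A x + (1/((n:ℝ)+2)) * B x)
      Filter.atTop (nhds (A x)) := by
    have := (((tendsto_const_nhds (x := (1:ℝ))).sub hδlim).mul
      (tendsto_const_nhds (x := A x))).add (hδlim.mul (tendsto_const_nhds (x := B x)))
    simpa using this
  exact le_of_tendsto_of_tendsto' hL hR key

lemma score_eq (hs : StrictlyF0Consistent s) (u v : ℝ) (f : ℝ → ℝ) (hc : Continuous f)
    (h0 : ∀ y, 0 ≤ f y) (hi : Integrable f) (h1 : (∫ y : ℝ, f y) = 1)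
    (hmu : MonotoneOn f (Set.Iic u)) (hau : AntitoneOn f (Set.Ici u))
    (hmv : MonotoneOn f (Set.Iic v)) (hav : AntitoneOn f (Set.Ici v)) :
    (∫ y : ℝ, s (u, y) * f y) = ∫ y : ℝ, s (v, y) * f y :=
  le_antisymm (score_le hs u v f hc h0 hi h1 hmu hau)
    (score_le hs v u f hc h0 hi h1 hmv hav)

end Core
/-! ### Trapezoidal densities -/

noncomputable def trap (α β ε y : ℝ) : ℝ :=
  max 0 (min 1 (min ((y - α) / ε + 1) ((β - y) / ε + 1)))

lemma trap_nonneg (α β ε y : ℝ) : 0 ≤ trap α β ε y := le_max_left _ _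

lemma trap_le_one (α β ε y : ℝ) : trap α β ε y ≤ 1 :=
  max_le zero_le_one (min_le_left _ _)

lemma trap_continuous (α β ε : ℝ) : Continuous (trap α β ε) := by
  unfold trap
  fun_prop

lemma trap_eq_one (α β ε y : ℝ) (hε : 0 < ε) (h1 : α ≤ y) (h2 : y ≤ β) : trap α β ε y = 1 := by
  unfold trap
  have a1 : (1:ℝ) ≤ (y - α) / ε + 1 := by
    have : 0 ≤ (y - α) / ε := div_nonneg (by linarith) hε.le
    linarith
  have a2 : (1:ℝ) ≤ (β - y) / ε + 1 := by
    have : 0 ≤ (β - y) / ε := div_nonneg (by linarith) hε.le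
    linarith
  rw [min_eq_left (le_min a1 a2), max_eq_right zero_le_one]

lemma trap_eq_zero_left (α β ε y : ℝ) (hε : 0 < ε) (h : y ≤ α - ε) : trap α β ε y = 0 := by
  unfold trap
  have a1 : (y - α) / ε + 1 ≤ 0 := by
    have : (y - α) / ε ≤ -1 := by
      rw [div_le_iff₀ hε]
      linarith
    linarith
  have : min 1 (min ((y - α) / ε + 1) ((β - y) / ε + 1)) ≤ 0 :=
    le_trans (min_le_right _ _) (le_trans (min_le_left _ _) a1)
  exact max_eq_left this

lemma trap_eq_zero_right (α β ε y : ℝ) (hε : 0 < ε) (h : β + ε ≤ y) : trap α β ε y = 0 := by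
  unfold trap
  have a1 : (β - y) / ε + 1 ≤ 0 := by
    have : (β - y) / ε ≤ -1 := by
      rw [div_le_iff₀ hε]
      linarith
    linarith
  have : min 1 (min ((y - α) / ε + 1) ((β - y) / ε + 1)) ≤ 0 :=
    le_trans (min_le_right _ _) (le_trans (min_le_right _ _) a1)
  exact max_eq_left this

lemma trap_mono (α β ε : ℝ) (hε : 0 < ε) : MonotoneOn (trap α β ε) (Set.Iic β) := by
  have key : ∀ y ∈ Set.Iic β, trap α β ε y = max 0 (min 1 ((y - α) / ε + 1)) := by
    intro y hy
    simp only [Set.mem_Iic] at hy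
    unfold trap
    have a2 : (1:ℝ) ≤ (β - y) / ε + 1 := by
      have : 0 ≤ (β - y) / ε := div_nonneg (by linarith) hε.le
      linarith
    congr 1
    rw [min_comm ((y - α) / ε + 1) ((β - y) / ε + 1), ← min_assoc, min_eq_left a2]
  intro x hx y hy hxy
  rw [key x hx, key y hy]
  have : (x - α) / ε + 1 ≤ (y - α) / ε + 1 := by
    have := div_le_div_of_nonneg_right (sub_le_sub_right hxy α) hε.le
    linarith
  exact max_le_max le_rfl (min_le_min le_rfl this)

lemma trap_anti (α β ε : ℝ) (hε : 0 < ε) : AntitoneOn (trap α β ε) (Set.Ici α) := by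
  have key : ∀ y ∈ Set.Ici α, trap α β ε y = max 0 (min 1 ((β - y) / ε + 1)) := by
    intro y hy
    simp only [Set.mem_Ici] at hy
    unfold trap
    have a2 : (1:ℝ) ≤ (y - α) / ε + 1 := by
      have : 0 ≤ (y - α) / ε := div_nonneg (by linarith) hε.le
      linarith
    congr 1
    rw [← min_assoc, min_eq_left a2]
  intro x hx y hy hxy
  rw [key x hx, key y hy]
  have : (β - y) / ε + 1 ≤ (β - x) / ε + 1 := by
    have := div_le_div_of_nonneg_right (sub_le_sub_left hxy β) hε.le
    linarith
  exact max_le_max le_rfl (min_le_min le_rfl this)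

lemma trap_hcs (α β ε : ℝ) (hε : 0 < ε) : HasCompactSupport (trap α β ε) := by
  apply HasCompactSupport.intro (isCompact_Icc (a := α - ε) (b := β + ε))
  intro y hy
  simp only [Set.mem_Icc, not_and_or, not_le] at hy
  rcases hy with h | h
  · exact trap_eq_zero_left α β ε y hε (by linarith)
  · exact trap_eq_zero_right α β ε y hε (by linarith)

lemma trap_integrable (α β ε : ℝ) (hε : 0 < ε) : Integrable (trap α β ε) :=
  (trap_continuous α β ε).integrable_of_hasCompactSupport (trap_hcs α β ε hε)

lemma trap_integral_pos (α β ε : ℝ) (hε : 0 < ε) (hαβ : α < β) :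
    0 < ∫ y : ℝ, trap α β ε y := by
  have h1 : (∫ y in Set.Icc α β, trap α β ε y) ≤ ∫ y : ℝ, trap α β ε y :=
    setIntegral_le_integral (trap_integrable α β ε hε)
      (Filter.Eventually.of_forall fun y => trap_nonneg α β ε y)
  have h2 : (∫ y in Set.Icc α β, trap α β ε y) = β - α := by
    rw [setIntegral_congr_fun measurableSet_Icc
      (fun y hy => trap_eq_one α β ε y hε hy.1 hy.2)]
    simp [Real.volume_Icc, ENNReal.toReal_ofReal (by linarith : (0:ℝ) ≤ β - α), hαβ.le]
  linarith
/-! ### Local integrability and the trapezoid identity -/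

section Main

variable {s : ℝ × ℝ → ℝ}

lemma s_locint (hs : StrictlyF0Consistent s) (x A B : ℝ) :
    IntegrableOn (fun y => s (x, y)) (Set.Icc A B) volume := by
  set R := max |A| |B| with hR
  set c := Real.exp (-R ^ 2) / Real.sqrt Real.pi with hc
  have hc0 : 0 < c := div_pos (Real.exp_pos _) (Real.sqrt_pos.mpr Real.pi_pos)
  have hcy : ∀ y ∈ Set.Icc A B, c ≤ gsd 0 y := by
    intro y hy
    have h1 : y ≤ R := le_trans hy.2 (le_trans (le_abs_self B) (le_max_right _ _))
    have h2 : -R ≤ y := by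
      have : -|A| ≤ A := neg_abs_le A
      have : -R ≤ -|A| := neg_le_neg (le_max_left _ _)
      linarith [hy.1, neg_abs_le A]
    have hsq : y ^ 2 ≤ R ^ 2 := by nlinarith
    have : Real.exp (-R ^ 2) ≤ Real.exp (-(y - 0) ^ 2) := by
      apply Real.exp_le_exp.mpr
      nlinarith
    exact div_le_div_of_nonneg_right this (Real.sqrt_pos.mpr Real.pi_pos).le
  have hI : Integrable (fun y => |s (x, y)| * gsd 0 y) := hs.2.1 x (gsd 0) (gsd_memF0 0)
  refine Integrable.mono' ((hI.const_mul (1 / c)).integrableOn)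
    (s_meas hs x).aestronglyMeasurable ?_
  rw [ae_restrict_iff' measurableSet_Icc]
  refine Filter.Eventually.of_forall fun y hy => ?_
  rw [Real.norm_eq_abs]
  have h1 : |s (x, y)| * c ≤ |s (x, y)| * gsd 0 y :=
    mul_le_mul_of_nonneg_left (hcy y hy) (abs_nonneg _)
  calc |s (x, y)| = (1 / c) * (|s (x, y)| * c) := by field_simp
    _ ≤ (1 / c) * (|s (x, y)| * gsd 0 y) :=
        mul_le_mul_of_nonneg_left h1 (by positivity)

lemma trap_shaped_hyps (α β ε m : ℝ) (hαm : α ≤ m) (hmβ : m ≤ β) (hαβ : α < β) (hε : 0 < ε) :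
    let I := ∫ y : ℝ, trap α β ε y
    Continuous (fun y => trap α β ε y / I) ∧ (∀ y, 0 ≤ trap α β ε y / I) ∧
      Integrable (fun y => trap α β ε y / I) ∧ (∫ y : ℝ, trap α β ε y / I) = 1 ∧
      MonotoneOn (fun y => trap α β ε y / I) (Set.Iic m) ∧
      AntitoneOn (fun y => trap α β ε y / I) (Set.Ici m) := by
  intro I
  have hI : 0 < I := trap_integral_pos α β ε hε hαβ
  refine ⟨(trap_continuous α β ε).div_const I,
    fun y => div_nonneg (trap_nonneg α β ε y) hI.le,
    (trap_integrable α β ε hε).div_const I, ?_, ?_, ?_⟩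
  · rw [integral_div, div_self hI.ne']
  · intro x hx y hy hxy
    exact div_le_div_of_nonneg_right
      (trap_mono α β ε hε (Set.mem_Iic.mpr (le_trans (Set.mem_Iic.mp hx) hmβ))
        (Set.mem_Iic.mpr (le_trans (Set.mem_Iic.mp hy) hmβ)) hxy) hI.le
  · intro x hx y hy hxy
    exact div_le_div_of_nonneg_right
      (trap_anti α β ε hε (Set.mem_Ici.mpr (le_trans hαm (Set.mem_Ici.mp hx)))
        (Set.mem_Ici.mpr (le_trans hαm (Set.mem_Ici.mp hy))) hxy) hI.le

lemma trap_prod_integrable (hs : StrictlyF0Consistent s) (x m α β ε : ℝ)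
    (hαm : α ≤ m) (hmβ : m ≤ β) (hαβ : α < β) (hε : 0 < ε) :
    Integrable (fun y => s (x, y) * trap α β ε y) := by
  obtain ⟨hc, h0, hi, h1, hm, ha⟩ := trap_shaped_hyps α β ε m hαm hmβ hαβ hε
  set I := ∫ y : ℝ, trap α β ε y with hIdef
  have hI : 0 < I := trap_integral_pos α β ε hε hαβ
  have h := (int_prod hs x m _ hc h0 hi h1 hm ha).const_mul I
  refine h.congr (Filter.Eventually.of_forall fun y => ?_)
  field_simp

lemma trap_score_eq (hs : StrictlyF0Consistent s) (u v α β ε : ℝ) (huv : u < v)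
    (hαu : α ≤ u) (hvβ : v ≤ β) (hε : 0 < ε) :
    (∫ y : ℝ, s (u, y) * trap α β ε y) = ∫ y : ℝ, s (v, y) * trap α β ε y := by
  have hαβ : α < β := lt_of_le_of_lt hαu (lt_of_lt_of_le huv hvβ)
  obtain ⟨hc, h0, hi, h1, hmu, hau⟩ :=
    trap_shaped_hyps α β ε u hαu (le_trans huv.le hvβ) hαβ hε
  obtain ⟨_, _, _, _, hmv, hav⟩ :=
    trap_shaped_hyps α β ε v (le_trans hαu huv.le) hvβ hαβ hε
  set I := ∫ y : ℝ, trap α β ε y with hIdef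
  have hI : 0 < I := trap_integral_pos α β ε hε hαβ
  have key := score_eq hs u v _ hc h0 hi h1 hmu hau hmv hav
  have conv : ∀ t : ℝ, (∫ y : ℝ, s (t, y) * (trap α β ε y / I))
      = (∫ y : ℝ, s (t, y) * trap α β ε y) / I := by
    intro t
    rw [← integral_div]
    congr 1
    funext y
    ring
  rw [conv u, conv v, div_eq_div_iff hI.ne' hI.ne'] at key
  exact mul_right_cancel₀ hI.ne' key

lemma icc_score_zero (hs : StrictlyF0Consistent s) (u v α β : ℝ) (huv : u < v)
    (hαu : α ≤ u) (hvβ : v ≤ β) :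
    (∫ y in Set.Icc α β, (s (u, y) - s (v, y))) = 0 := by
  have hαβ : α < β := lt_of_le_of_lt hαu (lt_of_lt_of_le huv hvβ)
  set F : ℕ → ℝ → ℝ := fun n y =>
    s (u, y) * trap α β (1 / (n + 1)) y - s (v, y) * trap α β (1 / (n + 1)) y with hF
  have hεn : ∀ n : ℕ, (0:ℝ) < 1 / ((n:ℝ) + 1) := fun n => by positivity
  have hεn1 : ∀ n : ℕ, (1:ℝ) / ((n:ℝ) + 1) ≤ 1 := fun n => by
    rw [div_le_one (by positivity)]
    have : (0:ℝ) ≤ (n:ℝ) := Nat.cast_nonneg n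
    linarith
  have hFint : ∀ n, Integrable (F n) := fun n =>
    (trap_prod_integrable hs u u α β _ hαu (le_trans huv.le hvβ) hαβ (hεn n)).sub
      (trap_prod_integrable hs v u α β _ hαu (le_trans huv.le hvβ) hαβ (hεn n))
  have hFzero : ∀ n, (∫ y : ℝ, F n y) = 0 := by
    intro n
    rw [integral_sub
      (trap_prod_integrable hs u u α β _ hαu (le_trans huv.le hvβ) hαβ (hεn n))
      (trap_prod_integrable hs v u α β _ hαu (le_trans huv.le hvβ) hαβ (hεn n)),
      trap_score_eq hs u v α β _ huv hαu hvβ (hεn n), sub_self]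
  set bound : ℝ → ℝ :=
    Set.indicator (Set.Icc (α - 1) (β + 1)) (fun y => |s (u, y)| + |s (v, y)|) with hbd
  have hbint : Integrable bound := by
    apply MeasureTheory.IntegrableOn.integrable_indicator ?_ measurableSet_Icc
    exact ((s_locint hs u (α - 1) (β + 1)).abs).add ((s_locint hs v (α - 1) (β + 1)).abs)
  have hblem : ∀ n, ∀ᵐ y, ‖F n y‖ ≤ bound y := by
    intro n
    refine Filter.Eventually.of_forall fun y => ?_
    by_cases hy : y ∈ Set.Icc (α - 1) (β + 1)
    · rw [hbd, Set.indicator_of_mem hy]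
      have ht0 := trap_nonneg α β (1 / ((n:ℝ) + 1)) y
      have ht1 := trap_le_one α β (1 / ((n:ℝ) + 1)) y
      have hFval : F n y = (s (u, y) - s (v, y)) * trap α β (1 / (↑n + 1)) y := by
        simp only [hF]; ring
      rw [Real.norm_eq_abs, hFval, abs_mul, abs_of_nonneg ht0]
      calc |s (u, y) - s (v, y)| * trap α β (1 / (↑n + 1)) y
          ≤ |s (u, y) - s (v, y)| * 1 := mul_le_mul_of_nonneg_left ht1 (abs_nonneg _)
        _ = |s (u, y) - s (v, y)| := mul_one _
        _ ≤ |s (u, y)| + |s (v, y)| := abs_sub _ _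
    · rw [hbd, Set.indicator_of_notMem hy]
      have htz : trap α β (1 / ((n:ℝ) + 1)) y = 0 := by
        simp only [Set.mem_Icc, not_and_or, not_le] at hy
        rcases hy with h | h
        · exact trap_eq_zero_left α β _ y (hεn n) (by linarith [hεn1 n])
        · exact trap_eq_zero_right α β _ y (hεn n) (by linarith [hεn1 n])
      have hFval : F n y = 0 := by simp only [hF]; rw [htz]; ring
      rw [hFval]
      simp
  have htends : ∀ᵐ y : ℝ, Filter.Tendsto (fun n => F n y) Filter.atTop
      (nhds (Set.indicator (Set.Icc α β) (fun y => s (u, y) - s (v, y)) y)) := by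
    refine Filter.Eventually.of_forall fun y => ?_
    by_cases hy : y ∈ Set.Icc α β
    · rw [Set.indicator_of_mem hy]
      have : ∀ n : ℕ, F n y = s (u, y) - s (v, y) := by
        intro n
        simp only [hF]
        rw [trap_eq_one α β _ y (hεn n) hy.1 hy.2]
        ring
      exact tendsto_const_nhds.congr fun n => (this n).symm
    · rw [Set.indicator_of_notMem hy]
      simp only [Set.mem_Icc, not_and_or, not_le] at hy
      have hev : ∀ᶠ n in Filter.atTop, F n y = 0 := by
        rcases hy with h | h
        · obtain ⟨N, hN⟩ := exists_nat_one_div_lt (show (0:ℝ) < α - y by linarith)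
          refine Filter.eventually_atTop.mpr ⟨N, fun n hn => ?_⟩
          have hle : (1:ℝ) / ((n:ℝ) + 1) ≤ 1 / ((N:ℝ) + 1) :=
            one_div_le_one_div_of_le (by positivity)
              (add_le_add_left (Nat.cast_le.mpr hn) 1)
          have htz : trap α β (1 / ((n:ℝ) + 1)) y = 0 :=
            trap_eq_zero_left α β _ y (hεn n) (by linarith)
          simp only [hF]; rw [htz]; ring
        · obtain ⟨N, hN⟩ := exists_nat_one_div_lt (show (0:ℝ) < y - β by linarith)
          refine Filter.eventually_atTop.mpr ⟨N, fun n hn => ?_⟩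
          have hle : (1:ℝ) / ((n:ℝ) + 1) ≤ 1 / ((N:ℝ) + 1) :=
            one_div_le_one_div_of_le (by positivity)
              (add_le_add_left (Nat.cast_le.mpr hn) 1)
          have htz : trap α β (1 / ((n:ℝ) + 1)) y = 0 :=
            trap_eq_zero_right α β _ y (hεn n) (by linarith)
          simp only [hF]; rw [htz]; ring
      exact Filter.Tendsto.congr' (hev.mono fun n h => h.symm) tendsto_const_nhds
  have hmeas : ∀ n, AEStronglyMeasurable (F n) volume := fun n => (hFint n).1
  have hDCT := MeasureTheory.tendsto_integral_of_dominated_convergence bound hmeas hbint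
    hblem htends
  have hlim : Filter.Tendsto (fun n => (∫ y : ℝ, F n y)) Filter.atTop (nhds 0) := by
    exact Filter.Tendsto.congr (fun n => (hFzero n).symm) tendsto_const_nhds
  have := tendsto_nhds_unique hDCT hlim
  rwa [MeasureTheory.integral_indicator measurableSet_Icc] at this

end Main
/-! ### Interval consequences and Lebesgue differentiation -/

section Final

variable {s : ℝ × ℝ → ℝ}

lemma diff_locint (hs : StrictlyF0Consistent s) (u v p q : ℝ) :
    IntegrableOn (fun y => s (u, y) - s (v, y)) (Set.Icc p q) volume :=
  (s_locint hs u p q).sub (s_locint hs v p q)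

lemma left_zero (hs : StrictlyF0Consistent s) (u v p q : ℝ) (huv : u < v)
    (hpq : p ≤ q) (hqu : q ≤ u) :
    (∫ y in Set.Ico p q, (s (u, y) - s (v, y))) = 0 := by
  have h1 := icc_score_zero hs u v p v huv (hpq.trans hqu) le_rfl
  have h2 := icc_score_zero hs u v q v huv hqu le_rfl
  have hqv : q ≤ v := hqu.trans huv.le
  have hunion : Set.Ico p q ∪ Set.Icc q v = Set.Icc p v := Set.Ico_union_Icc_eq_Icc hpq hqv
  have hdisj : Disjoint (Set.Ico p q) (Set.Icc q v) :=
    Set.disjoint_left.mpr fun x hx hx' => (hx.2.not_ge hx'.1).elim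
  have hsplit := MeasureTheory.setIntegral_union hdisj measurableSet_Icc
    ((diff_locint hs u v p q).mono_set Set.Ico_subset_Icc_self)
    (diff_locint hs u v q v) (f := fun y => s (u, y) - s (v, y)) (μ := volume)
  rw [hunion] at hsplit
  rw [hsplit] at h1
  linarith

lemma G_zero (hs : StrictlyF0Consistent s) (a b c : ℝ) (hac : a < c) (hcb : c < b) :
    (∫ y in Set.Icc a c, (s (a, y) - s (b, y))) = 0 := by
  have e1 : (∫ y in Set.Icc a c, (s (a, y) - s (c, y))) = 0 :=
    icc_score_zero hs a c a c hac le_rfl le_rfl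
  have e2 : (∫ y in Set.Icc a c, (s (c, y) - s (b, y))) = 0 := by
    rw [integral_Icc_eq_integral_Ico]
    exact left_zero hs c b a c hcb hac.le le_rfl
  have hsplit : (∫ y in Set.Icc a c, (s (a, y) - s (b, y)))
      = (∫ y in Set.Icc a c, (s (a, y) - s (c, y)))
        + ∫ y in Set.Icc a c, (s (c, y) - s (b, y)) := by
    rw [← integral_add (diff_locint hs a c a c) (diff_locint hs c b a c)]
    congr 1
    funext y
    ring
  rw [hsplit, e1, e2, add_zero]

lemma ioc_zero (hs : StrictlyF0Consistent s) (a b p q : ℝ) (hab : a < b)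
    (hap : a < p) (hpq : p ≤ q) (hqb : q < b) :
    (∫ y in Set.Ioc p q, (s (a, y) - s (b, y))) = 0 := by
  have g1 : (∫ y in Set.Icc a p, (s (a, y) - s (b, y))) = 0 := G_zero hs a b p hap (hpq.trans_lt hqb)
  have g2 : (∫ y in Set.Icc a q, (s (a, y) - s (b, y))) = 0 :=
    G_zero hs a b q (hap.trans_le hpq) hqb
  have hunion : Set.Icc a p ∪ Set.Ioc p q = Set.Icc a q :=
    Set.Icc_union_Ioc_eq_Icc (hap.le.trans le_rfl) hpq
  have hdisj : Disjoint (Set.Icc a p) (Set.Ioc p q) :=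
    Set.disjoint_left.mpr fun x hx hx' => (hx.2.not_gt hx'.1).elim
  have hsplit := MeasureTheory.setIntegral_union hdisj measurableSet_Ioc
    (diff_locint hs a b a p)
    ((diff_locint hs a b p q).mono_set Set.Ioc_subset_Icc_self)
    (f := fun y => s (a, y) - s (b, y)) (μ := volume)
  rw [hunion] at hsplit
  rw [hsplit, g1] at g2
  linarith

lemma ae_zero_of_intervals (g : ℝ → ℝ) (hmeas : Measurable g)
    (hloc : ∀ p q : ℝ, IntegrableOn g (Set.Icc p q) volume)
    (A B : ℝ) (h0 : ∀ p q : ℝ, A < p → p ≤ q → q < B → (∫ y in Set.Ioc p q, g y) = 0) :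
    ∀ᵐ y : ℝ, y ∈ Set.Ioo A B → g y = 0 := by
  set f : ℝ → ℝ := (Set.Ioo A B).indicator g with hf
  have hfli : MeasureTheory.LocallyIntegrable f volume := by
    rw [MeasureTheory.locallyIntegrable_iff]
    intro k hk
    obtain ⟨r, hr⟩ := hk.isBounded.subset_closedBall (0:ℝ)
    have hIcc : k ⊆ Set.Icc (0 - r) (0 + r) := by rwa [← Real.closedBall_eq_Icc]
    exact (((hloc (0 - r) (0 + r)).indicator measurableSet_Ioo).mono_set hIcc)
  filter_upwards [IsUnifLocDoublingMeasure.ae_tendsto_average (μ := volume) hfli 1]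
    with x hx hxIoo
  have hmem : ∀ᶠ r in nhdsWithin (0:ℝ) (Set.Ioi 0), x ∈ Metric.closedBall x (1 * r) := by
    filter_upwards [self_mem_nhdsWithin] with r hr
    exact Metric.mem_closedBall_self (by simpa using (Set.mem_Ioi.mp hr).le)
  have htd := hx (fun _ : ℝ => x) id tendsto_id hmem
  have hev : ∀ᶠ r in nhdsWithin (0:ℝ) (Set.Ioi 0),
      (⨍ y in Metric.closedBall x r, f y) = 0 := by
    have hpos : 0 < min (x - A) (B - x) := lt_min (by linarith [hxIoo.1]) (by linarith [hxIoo.2])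
    filter_upwards [Ioo_mem_nhdsGT_of_mem (Set.mem_Ico.mpr ⟨le_rfl, hpos⟩)] with r hr
    obtain ⟨hr0, hrm⟩ := hr
    have hrA : A < x - r := by
      have := lt_of_lt_of_le hrm (min_le_left _ _)
      linarith
    have hrB : x + r < B := by
      have := lt_of_lt_of_le hrm (min_le_right _ _)
      linarith
    have hball : Metric.closedBall x r = Set.Icc (x - r) (x + r) := Real.closedBall_eq_Icc
    have hsub : Set.Icc (x - r) (x + r) ⊆ Set.Ioo A B := fun y hy =>
      ⟨lt_of_lt_of_le hrA hy.1, lt_of_le_of_lt hy.2 hrB⟩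
    have hint : (∫ y in Metric.closedBall x r, f y) = 0 := by
      rw [hball, hf, setIntegral_indicator measurableSet_Ioo,
        Set.inter_eq_left.mpr hsub, integral_Icc_eq_integral_Ioc]
      exact h0 (x - r) (x + r) hrA (by linarith) hrB
    rw [MeasureTheory.setAverage_eq, hint, smul_zero]
  have hfx : f x = 0 :=
    tendsto_nhds_unique htd (Filter.Tendsto.congr' (hev.mono fun r h => h.symm)
      tendsto_const_nhds)
  rwa [hf, Set.indicator_of_mem hxIoo] at hfx

end Final

/-- Lemma 3: if `s` is strictly 𝓕₀-consistent for the mode and `a < b`, then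
`s(a, y) = s(b, y)` for Lebesgue almost all `y ∈ (a, b)`. -/
theorem score_ae_eq_on_interval (s : ℝ × ℝ → ℝ) (hs : StrictlyF0Consistent s)
    (a b : ℝ) (hab : a < b) :
    ∀ᵐ y : ℝ, y ∈ Set.Ioo a b → s (a, y) = s (b, y) := by
  have key := ae_zero_of_intervals (fun y => s (a, y) - s (b, y))
    ((s_meas hs a).sub (s_meas hs b)) (fun p q => diff_locint hs a b p q) a b
    (fun p q hap hpq hqb => ioc_zero hs a b p q hab hap hpq hqb)
  filter_upwards [key] with y hy hyIoo
  have := hy hyIoo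
  linarith
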